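/- arXiv:1202.0952 — 2 statements merged into one kernel-verified Lean document; each statement's English description precedes it below -/
import Mathlib

section
/- The following are equivalent: (1) there exist a function f ∈ Dom_+(Γ) with f(x) > 0 for all x ∈ 𝕏 and a constant ε > 0 such that Γf(x) ≤ −ε for all x ∈ 𝕏; (2) the explosion time ζ satisfies E_x(ζ) < ∞ for all x ∈ 𝕏. -/
open MeasureTheory Set Filter
open scoped Classical ENNReal NNReal

/-- A continuous-time Markov chain on a countably infinite state space `X`,
described by its generator `Γ`, together with a probability space carrying,
for each starting point `x`, the embedded jump chain `jump` and the holding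
times `hold` (with `hold n` the holding time at the `n`-th visited state). -/
structure CTMC where
  X : Type
  countX : Countable X
  infX : Infinite X
  Γ : X → X → ℝ
  γ : X → ℝ
  γ_pos : ∀ x, 0 < γ x
  Γ_offdiag_nonneg : ∀ x y, y ≠ x → 0 ≤ Γ x y
  Γ_diag : ∀ x, Γ x x = - γ x
  γ_sum : ∀ x, HasSum (fun y => if y = x then 0 else Γ x y) (γ x)
  /-- irreducibility of the embedded jump chain -/
  irr : ∀ x y : X, ∃ (n : ℕ) (path : ℕ → X), path 0 = x ∧ path n = y ∧
    ∀ k, k < n → 0 < (if path (k+1) = path k then 0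
      else Γ (path k) (path (k+1)) / γ (path k))
  Ω : Type
  measΩ : MeasurableSpace Ω
  μ : X → @Measure Ω measΩ
  probμ : ∀ x, @IsProbabilityMeasure Ω measΩ (μ x)
  jump : ℕ → Ω → X
  hold : ℕ → Ω → ℝ
  jump_meas : ∀ (n : ℕ) (x : X), MeasurableSet[measΩ] {ω | jump n ω = x}
  hold_meas : ∀ n : ℕ, @Measurable Ω ℝ measΩ _ (hold n)
  hold_pos : ∀ n ω, 0 < hold n ω
  /-- under `μ x` the chain starts at `x` -/
  start : ∀ x : X, μ x {ω | jump 0 ω = x} = 1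
  /-- finite-dimensional law: the embedded chain is Markov with transition
  probabilities `P x y = Γ x y / γ x` (for `y ≠ x`), and conditionally on the
  embedded chain the holding times are independent exponentials of rates
  `γ (jump n)` -/
  law : ∀ (x : X) (n : ℕ) (path : ℕ → X) (t : ℕ → ℝ), path 0 = x → (∀ k, 0 ≤ t k) →
    μ x {ω | (∀ k, k ≤ n → jump k ω = path k) ∧ (∀ k, k < n → t k < hold k ω)}
      = ENNReal.ofReal (∏ k ∈ Finset.range n,
          ((if path (k+1) = path k then 0 else Γ (path k) (path (k+1)) / γ (path k))
            * Real.exp (-(γ (path k)) * t k)))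

namespace CTMC

attribute [instance] CTMC.countX CTMC.infX CTMC.measΩ CTMC.probμ

variable (M : CTMC)

/-- embedded chain transition probabilities -/
noncomputable def P (x y : M.X) : ℝ := if y = x then 0 else M.Γ x y / M.γ x

/-- jump times -/
noncomputable def J (n : ℕ) (ω : M.Ω) : ℝ := ∑ k ∈ Finset.range n, M.hold k ω

/-- explosion (life) time -/
noncomputable def zeta (ω : M.Ω) : ℝ≥0∞ := ⨆ n, ENNReal.ofReal (M.J n ω)

/-- the continuous-time chain: `pos t ω = some (jump n ω)` if `J n ≤ t < J (n+1)`,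
and `none` (the cemetery state `∂`) after the explosion time. -/
noncomputable def pos (t : ℝ) (ω : M.Ω) : Option M.X :=
  if h : ∃ n, M.J n ω ≤ t ∧ t < M.J (n+1) ω then some (M.jump h.choose ω) else none

/-- passage time: `τ_A = inf {t ≥ 0 : ξ_t ∈ A}` -/
noncomputable def tau (A : Set M.X) (ω : M.Ω) : ℝ≥0∞ :=
  sInf (ENNReal.ofReal '' {s : ℝ | 0 ≤ s ∧ ∃ a ∈ A, M.pos s ω = some a})

/-- `f` belongs to the domain of the generator -/
def InDom (f : M.X → ℝ) : Prop :=
  ∀ x : M.X, Summable (fun y => if y = x then 0 else M.Γ x y * f y)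

/-- `f ∈ Dom_+(Γ)` -/
def InDomPos (f : M.X → ℝ) : Prop := (∀ x, 0 ≤ f x) ∧ M.InDom f

/-- action of the generator : `Γ f (x) = ∑_y Γ_{xy} f(y)` -/
noncomputable def gen (f : M.X → ℝ) (x : M.X) : ℝ :=
  (∑' y, if y = x then 0 else M.Γ x y * f y) - M.γ x * f x

/-- recurrence of the embedded jump chain -/
def JumpRecurrent : Prop := ∀ x : M.X, M.μ x {ω | ∃ n, 1 ≤ n ∧ M.jump n ω = x} = 1

/-- `f → ∞` : all sublevel sets are finite -/
def FinSublevels (f : M.X → ℝ) : Prop := ∀ r : ℝ, {x : M.X | f x ≤ r}.Finite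

end CTMC


namespace CTMC

variable (M : CTMC)

lemma P_nonneg (x y : M.X) : 0 ≤ M.P x y := by
  rw [P]; split
  · exact le_refl _
  · exact div_nonneg (M.Γ_offdiag_nonneg x y (by assumption)) (M.γ_pos x).le

lemma hasSum_P (x : M.X) : HasSum (fun y => M.P x y) 1 := by
  have h := (M.γ_sum x).div_const (M.γ x)
  rw [div_self (M.γ_pos x).ne'] at h
  convert h using 1
  · rfl
  funext y
  rw [P]; split
  · simp
  · rfl

/-- the path of length `n` starting at `x` with subsequent states `q` -/
def pth {X : Type} (x : X) {n : ℕ} (q : Fin n → X) (k : ℕ) : X :=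
  if h : k - 1 < n then (if k = 0 then x else q ⟨k - 1, h⟩) else x

lemma pth_zero {X : Type} (x : X) {n : ℕ} (q : Fin n → X) : pth x q 0 = x := by
  rw [pth]; split <;> simp

lemma pth_succ {X : Type} (x : X) {n : ℕ} (q : Fin n → X) {k : ℕ} (h : k < n) :
    pth x q (k + 1) = q ⟨k, h⟩ := by
  rw [pth]
  simp only [Nat.add_sub_cancel, Nat.succ_ne_zero, if_false]
  rw [dif_pos h]

/-- weight of a path -/
noncomputable def W (n : ℕ) (x : M.X) (q : Fin n → M.X) : ℝ :=
  ∏ k ∈ Finset.range n, M.P (pth x q k) (pth x q (k+1))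

lemma W_nonneg (n : ℕ) (x : M.X) (q : Fin n → M.X) : 0 ≤ M.W n x q :=
  Finset.prod_nonneg fun k _ => M.P_nonneg _ _

/-- cylinder event -/
def A (n : ℕ) (x : M.X) (q : Fin n → M.X) : Set M.Ω :=
  {ω | ∀ k, k ≤ n → M.jump k ω = pth x q k}

lemma measurableSet_A (n : ℕ) (x : M.X) (q : Fin n → M.X) : MeasurableSet (M.A n x q) := by
  have : M.A n x q = ⋂ k, ⋂ (_ : k ≤ n), {ω | M.jump k ω = pth x q k} := by
    ext ω; simp [A]
  rw [this]
  exact MeasurableSet.iInter fun k => MeasurableSet.iInter fun _ => M.jump_meas k _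

lemma meas_A_inter (n m : ℕ) (hm : m < n) (x : M.X) (q : Fin n → M.X) {t : ℝ} (ht : 0 ≤ t) :
    M.μ x (M.A n x q ∩ {ω | t < M.hold m ω})
      = ENNReal.ofReal (M.W n x q * Real.exp (-M.γ (pth x q m) * t)) := by
  have hlaw := M.law x n (pth x q) (fun j => if j = m then t else 0) (pth_zero x q)
    (fun k => by split <;> simp [ht])
  have hset : {ω | (∀ k, k ≤ n → M.jump k ω = pth x q k) ∧
      (∀ k, k < n → (if k = m then t else 0) < M.hold k ω)}
      = M.A n x q ∩ {ω | t < M.hold m ω} := by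
    ext ω
    constructor
    · rintro ⟨h1, h2⟩
      refine ⟨h1, ?_⟩
      have := h2 m hm
      simpa using this
    · rintro ⟨h1, h2⟩
      refine ⟨h1, fun k hk => ?_⟩
      split
      · next h => subst h; exact h2
      · exact M.hold_pos k ω
  rw [hset] at hlaw
  rw [hlaw]
  congr 1
  have hprod : ∀ k ∈ Finset.range n,
      ((if pth x q (k+1) = pth x q k then 0
          else M.Γ (pth x q k) (pth x q (k+1)) / M.γ (pth x q k))
        * Real.exp (-(M.γ (pth x q k)) * if k = m then t else 0))
      = M.P (pth x q k) (pth x q (k+1))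
          * (if k = m then Real.exp (-M.γ (pth x q m) * t) else 1) := by
    intro k _
    rw [P]
    congr 1
    split
    · next h => subst h; rfl
    · rw [mul_zero, Real.exp_zero]
  rw [Finset.prod_congr rfl hprod, Finset.prod_mul_distrib]
  rw [Finset.prod_ite_eq' (Finset.range n) m
    (fun _ => Real.exp (-M.γ (pth x q m) * t)), if_pos (Finset.mem_range.mpr hm)]
  rfl

lemma meas_eq_tsum (n : ℕ) (x : M.X) {B : Set M.Ω} (hB : MeasurableSet B) :
    M.μ x B = ∑' q : Fin n → M.X, M.μ x (M.A n x q ∩ B) := by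
  have hcover : {ω | M.jump 0 ω = x} = ⋃ q : Fin n → M.X, M.A n x q := by
    ext ω
    simp only [mem_setOf_eq, mem_iUnion]
    constructor
    · intro h0
      refine ⟨fun i => M.jump (i.1 + 1) ω, fun k hk => ?_⟩
      match k with
      | 0 => rw [pth_zero]; exact h0
      | (j+1) => rw [pth_succ x _ (by omega : j < n)]
    · rintro ⟨q, hq⟩
      have := hq 0 (Nat.zero_le n)
      rwa [pth_zero] at this
  have hdisj : Pairwise (Function.onFun Disjoint fun q : Fin n → M.X => M.A n x q ∩ B) := by
    intro q q' hne
    obtain ⟨i, hi⟩ := Function.ne_iff.mp hne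
    refine Set.disjoint_left.mpr ?_
    rintro ω ⟨hq, -⟩ ⟨hq', -⟩
    apply hi
    have h1 := hq (i.1 + 1) (Nat.succ_le_of_lt i.isLt)
    have h2 := hq' (i.1 + 1) (Nat.succ_le_of_lt i.isLt)
    rw [pth_succ x q i.isLt] at h1
    rw [pth_succ x q' i.isLt] at h2
    rw [← h1, h2]
  have hnull : M.μ x {ω | M.jump 0 ω = x}ᶜ = 0 := by
    rw [measure_compl (M.jump_meas 0 x) (measure_ne_top _ _), M.start x, measure_univ,
      tsub_self]
  calc M.μ x B = M.μ x (B ∩ {ω | M.jump 0 ω = x}) := (measure_inter_conull hnull).symm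
    _ = M.μ x (⋃ q : Fin n → M.X, M.A n x q ∩ B) := by
        rw [hcover, Set.inter_iUnion]
        simp_rw [Set.inter_comm B]
    _ = ∑' q : Fin n → M.X, M.μ x (M.A n x q ∩ B) :=
        measure_iUnion hdisj fun q => (M.measurableSet_A n x q).inter hB

lemma meas_hold_gt (m : ℕ) (x : M.X) {t : ℝ} (ht : 0 ≤ t) :
    M.μ x {ω | t < M.hold m ω}
      = ∑' q : Fin (m+1) → M.X,
          ENNReal.ofReal (M.W (m+1) x q * Real.exp (-M.γ (pth x q m) * t)) := by
  rw [M.meas_eq_tsum (m+1) x (measurableSet_lt measurable_const (M.hold_meas m))]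
  exact tsum_congr fun q => M.meas_A_inter (m+1) m (Nat.lt_succ_self m) x q ht

/-- expected holding times -/
noncomputable def G (m : ℕ) (x : M.X) : ℝ≥0∞ := ∫⁻ ω, ENNReal.ofReal (M.hold m ω) ∂ M.μ x

lemma lintegral_exp_Ioi {c : ℝ} (hc : 0 < c) :
    ∫⁻ t in Ioi (0:ℝ), ENNReal.ofReal (Real.exp (-c * t)) = ENNReal.ofReal (1 / c) := by
  rw [← ofReal_integral_eq_lintegral_ofReal (exp_neg_integrableOn_Ioi 0 hc)
    (ae_of_all _ fun t => (Real.exp_pos _).le)]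
  congr 1
  have := integral_comp_mul_left_Ioi (fun u => Real.exp (-u)) 0 hc
  simp only [mul_zero, integral_exp_neg_Ioi_zero, smul_eq_mul, mul_one, neg_mul] at this ⊢
  rw [this, one_div]

lemma G_eq (m : ℕ) (x : M.X) :
    M.G m x = ∑' q : Fin (m+1) → M.X,
      ENNReal.ofReal (M.W (m+1) x q) * ENNReal.ofReal (1 / M.γ (pth x q m)) := by
  rw [G, lintegral_eq_lintegral_meas_lt _ (ae_of_all _ fun ω => (M.hold_pos m ω).le)
    (M.hold_meas m).aemeasurable]
  rw [setLIntegral_congr_fun measurableSet_Ioi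
    (fun t (ht : t ∈ Ioi (0:ℝ)) => M.meas_hold_gt m x (le_of_lt ht))]
  rw [lintegral_tsum (fun q => Measurable.aemeasurable (by fun_prop))]
  refine tsum_congr fun q => ?_
  have h1 : ∀ t : ℝ, ENNReal.ofReal (M.W (m+1) x q * Real.exp (-M.γ (pth x q m) * t))
      = ENNReal.ofReal (M.W (m+1) x q) * ENNReal.ofReal (Real.exp (-M.γ (pth x q m) * t)) :=
    fun t => ENNReal.ofReal_mul (M.W_nonneg (m+1) x q)
  simp_rw [h1]
  rw [lintegral_const_mul _ (by fun_prop : Measurable fun t : ℝ =>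
    ENNReal.ofReal (Real.exp (-M.γ (pth x q m) * t)))]
  rw [lintegral_exp_Ioi (M.γ_pos (pth x q m))]

lemma pth_cons (x y : M.X) {n : ℕ} (r : Fin (n+1) → M.X) {k : ℕ} (hk : k ≤ n + 1) :
    pth x (Fin.cons y r : Fin (n+2) → M.X) (k+1) = pth y r k := by
  match k, hk with
  | 0, _ =>
    rw [pth_succ x _ (by omega : 0 < n + 2), pth_zero]
    rfl
  | (j+1), hk =>
    rw [pth_succ x _ (by omega : j + 1 < n + 2), pth_succ y r (by omega : j < n + 1)]
    rfl

lemma W_cons (x y : M.X) {n : ℕ} (r : Fin (n+1) → M.X) :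
    M.W (n+2) x (Fin.cons y r) = M.P x y * M.W (n+1) y r := by
  rw [W, Finset.prod_range_succ']
  have h0 : M.P (pth x (Fin.cons y r : Fin (n+2) → M.X) 0)
      (pth x (Fin.cons y r : Fin (n+2) → M.X) (0+1)) = M.P x y := by
    rw [pth_zero, M.pth_cons x y r (by omega : 0 ≤ n + 1), pth_zero]
  rw [h0, mul_comm]
  congr 1
  rw [W]
  refine Finset.prod_congr rfl fun k hk => ?_
  have hk' := Finset.mem_range.mp hk
  rw [M.pth_cons x y r (by omega : k ≤ n + 1)]
  have : k + 1 + 1 = (k + 1) + 1 := rfl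
  rw [M.pth_cons x y r (by omega : k + 1 ≤ n + 1)]

lemma G_succ (m : ℕ) (x : M.X) :
    M.G (m+1) x = ∑' y : M.X, ENNReal.ofReal (M.P x y) * M.G m y := by
  rw [M.G_eq (m+1) x]
  rw [← Equiv.tsum_eq (Fin.consEquiv (fun _ : Fin (m+2) => M.X))]
  rw [ENNReal.tsum_prod']
  refine tsum_congr fun y => ?_
  rw [M.G_eq m y, ← ENNReal.tsum_mul_left]
  refine tsum_congr fun r => ?_
  show ENNReal.ofReal (M.W (m+2) x (Fin.cons y r))
      * ENNReal.ofReal (1 / M.γ (pth x (Fin.cons y r : Fin (m+2) → M.X) (m+1))) = _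
  rw [M.W_cons x y r, M.pth_cons x y r (by omega : m ≤ m + 1),
    ENNReal.ofReal_mul (M.P_nonneg x y), mul_assoc]

lemma tsum_ofReal_P (x : M.X) : ∑' y, ENNReal.ofReal (M.P x y) = 1 := by
  rw [← ENNReal.ofReal_tsum_of_nonneg (M.P_nonneg x) (M.hasSum_P x).summable,
    (M.hasSum_P x).tsum_eq, ENNReal.ofReal_one]

lemma G_zero (x : M.X) : M.G 0 x = ENNReal.ofReal (1 / M.γ x) := by
  rw [M.G_eq 0 x]
  rw [← Equiv.tsum_eq (Equiv.funUnique (Fin 1) M.X).symm]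
  have h1 : ∀ y : M.X,
      ENNReal.ofReal (M.W 1 x ((Equiv.funUnique (Fin 1) M.X).symm y))
        * ENNReal.ofReal (1 / M.γ (pth x ((Equiv.funUnique (Fin 1) M.X).symm y) 0))
      = ENNReal.ofReal (M.P x y) * ENNReal.ofReal (1 / M.γ x) := by
    intro y
    rw [pth_zero]
    congr 2
    rw [W, Finset.prod_range_one, pth_zero, pth_succ x _ (by omega : 0 < 1)]
    rfl
  simp_rw [h1]
  rw [ENNReal.tsum_mul_right, M.tsum_ofReal_P, one_mul]

lemma EZ_eq (x : M.X) : ∫⁻ ω, M.zeta ω ∂ M.μ x = ∑' k, M.G k x := by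
  have hJm : ∀ n, Measurable fun ω => ENNReal.ofReal (M.J n ω) := fun n =>
    ENNReal.measurable_ofReal.comp (Finset.measurable_sum _ fun k _ => M.hold_meas k)
  have hmono : Monotone fun n => fun ω => ENNReal.ofReal (M.J n ω) := by
    intro a b hab
    intro ω
    apply ENNReal.ofReal_le_ofReal
    exact Finset.sum_le_sum_of_subset_of_nonneg
      (Finset.range_subset_range.mpr hab) (fun k _ _ => (M.hold_pos k ω).le)
  simp only [zeta]
  rw [lintegral_iSup hJm hmono, ENNReal.tsum_eq_iSup_nat]
  refine iSup_congr fun n => ?_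
  have h1 : ∀ ω, ENNReal.ofReal (M.J n ω)
      = ∑ k ∈ Finset.range n, ENNReal.ofReal (M.hold k ω) := fun ω =>
    ENNReal.ofReal_sum_of_nonneg fun k _ => (M.hold_pos k ω).le
  simp_rw [h1]
  rw [lintegral_finset_sum _ fun k _ => (M.hold_meas k).ennreal_ofReal]
  rfl

/-- iterates of `f` under the embedded chain -/
noncomputable def F (f : M.X → ℝ) : ℕ → M.X → ℝ≥0∞
  | 0 => fun x => ENNReal.ofReal (f x)
  | (n+1) => fun x => ∑' y, ENNReal.ofReal (M.P x y) * F f n y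

lemma main_ineq (f : M.X → ℝ) (ε : ℝ)
    (hKP : ∀ x, (∑' y, ENNReal.ofReal (M.P x y) * ENNReal.ofReal (f y))
      + ENNReal.ofReal ε * ENNReal.ofReal (1 / M.γ x) ≤ ENNReal.ofReal (f x)) :
    ∀ n x, M.F f n x + ENNReal.ofReal ε * ∑ k ∈ Finset.range n, M.G k x
      ≤ ENNReal.ofReal (f x) := by
  intro n
  induction n with
  | zero => intro x; simp [F]
  | succ n ih =>
    intro x
    have h1 : ∑ k ∈ Finset.range (n+1), M.G k x
        = ENNReal.ofReal (1 / M.γ x)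
          + ∑' y, ENNReal.ofReal (M.P x y) * ∑ k ∈ Finset.range n, M.G k y := by
      rw [Finset.sum_range_succ', M.G_zero x, add_comm]
      congr 1
      calc ∑ k ∈ Finset.range n, M.G (k+1) x
          = ∑ k ∈ Finset.range n, ∑' y, ENNReal.ofReal (M.P x y) * M.G k y :=
            Finset.sum_congr rfl fun k _ => M.G_succ k x
        _ = ∑' y, ∑ k ∈ Finset.range n, ENNReal.ofReal (M.P x y) * M.G k y :=
            (Summable.tsum_finsetSum fun k _ => ENNReal.summable).symm
        _ = ∑' y, ENNReal.ofReal (M.P x y) * ∑ k ∈ Finset.range n, M.G k y := by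
            refine tsum_congr fun y => ?_
            rw [Finset.mul_sum]
    rw [h1]
    have h2 : (∑' y, ENNReal.ofReal (M.P x y)
          * (M.F f n y + ENNReal.ofReal ε * ∑ k ∈ Finset.range n, M.G k y))
        = M.F f (n+1) x + ENNReal.ofReal ε
            * ∑' y, ENNReal.ofReal (M.P x y) * ∑ k ∈ Finset.range n, M.G k y := by
      simp_rw [mul_add]
      rw [ENNReal.tsum_add]
      congr 1
      rw [← ENNReal.tsum_mul_left]
      exact tsum_congr fun y => by rw [mul_left_comm]
    have h3 : M.F f (n+1) x + ENNReal.ofReal ε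
          * (ENNReal.ofReal (1 / M.γ x)
            + ∑' y, ENNReal.ofReal (M.P x y) * ∑ k ∈ Finset.range n, M.G k y)
        = (∑' y, ENNReal.ofReal (M.P x y)
            * (M.F f n y + ENNReal.ofReal ε * ∑ k ∈ Finset.range n, M.G k y))
          + ENNReal.ofReal ε * ENNReal.ofReal (1 / M.γ x) := by
      rw [h2, mul_add]
      ring
    rw [h3]
    exact le_trans (add_le_add_left (ENNReal.tsum_le_tsum fun y =>
      mul_le_mul_right (ih y) _) _) (hKP x)

end CTMC

set_option maxHeartbeats 1000000 in
open CTMC in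
/-- Theorem (explosion): there exists a strictly positive `f ∈ Dom_+(Γ)` with
`Γ f ≤ -ε` everywhere iff the explosion time has finite expectation from
every starting point. -/
theorem statement3 (M : CTMC) :
    (∃ (f : M.X → ℝ) (ε : ℝ), M.InDomPos f ∧ (∀ x, 0 < f x) ∧ 0 < ε ∧
      ∀ x : M.X, M.gen f x ≤ -ε) ↔
    (∀ x : M.X, ∫⁻ ω, M.zeta ω ∂ M.μ x < ⊤) := by
  constructor
  · rintro ⟨f, ε, ⟨hf0, hdom⟩, hfpos, hε, hgen⟩ x
    have hKP : ∀ z : M.X, (∑' y, ENNReal.ofReal (M.P z y) * ENNReal.ofReal (f y))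
        + ENNReal.ofReal ε * ENNReal.ofReal (1 / M.γ z) ≤ ENNReal.ofReal (f z) := by
      intro z
      have hγ := M.γ_pos z
      have hPf : ∀ y, M.P z y * f y = (if y = z then 0 else M.Γ z y * f y) / M.γ z := by
        intro y
        rw [P]
        split
        · simp
        · rw [div_mul_eq_mul_div]
      have hsum2 : Summable (fun y => M.P z y * f y) :=
        ((hdom z).div_const (M.γ z)).congr fun y => (hPf y).symm
      have hnn : ∀ y, 0 ≤ M.P z y * f y := fun y => mul_nonneg (M.P_nonneg z y) (hf0 y)
      have e1 : (∑' y, ENNReal.ofReal (M.P z y) * ENNReal.ofReal (f y))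
          = ENNReal.ofReal (∑' y, M.P z y * f y) := by
        rw [ENNReal.ofReal_tsum_of_nonneg hnn hsum2]
        exact tsum_congr fun y => (ENNReal.ofReal_mul (M.P_nonneg z y)).symm
      rw [e1, ← ENNReal.ofReal_mul hε.le, ← ENNReal.ofReal_add (tsum_nonneg hnn)
        (mul_nonneg hε.le (one_div_nonneg.mpr hγ.le))]
      apply ENNReal.ofReal_le_ofReal
      have hT : (∑' y, if y = z then 0 else M.Γ z y * f y) ≤ M.γ z * f z - ε := by
        have h1 := hgen z
        rw [gen] at h1
        linarith
      have e2 : (∑' y, M.P z y * f y)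
          = (∑' y, if y = z then 0 else M.Γ z y * f y) / M.γ z := by
        rw [tsum_congr hPf, tsum_div_const]
      rw [e2, mul_one_div, ← add_div, div_le_iff₀ hγ, mul_comm]
      linarith
    have hmain := M.main_ineq f ε hKP
    rw [M.EZ_eq x]
    have h2 : ENNReal.ofReal ε * ∑' (k : ℕ), M.G k x ≤ ENNReal.ofReal (f x) := by
      rw [ENNReal.tsum_eq_iSup_nat, ENNReal.mul_iSup]
      exact iSup_le fun n => le_trans le_add_self (hmain n x)
    have hεne : ENNReal.ofReal ε ≠ 0 := by
      simp only [ne_eq, ENNReal.ofReal_eq_zero, not_le]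
      exact hε
    calc ∑' (k : ℕ), M.G k x ≤ ENNReal.ofReal (f x) / ENNReal.ofReal ε := by
          rw [ENNReal.le_div_iff_mul_le (Or.inl hεne) (Or.inl ENNReal.ofReal_ne_top),
            mul_comm]
          exact h2
      _ < ⊤ := ENNReal.div_lt_top ENNReal.ofReal_ne_top hεne
  · intro h
    have hZt : ∀ x, (∑' (k : ℕ), M.G k x) ≠ ⊤ := fun x => by
      rw [← M.EZ_eq x]; exact (h x).ne
    have hrec : ∀ x, (∑' (k : ℕ), M.G k x)
        = ENNReal.ofReal (1 / M.γ x) + ∑' y, ENNReal.ofReal (M.P x y) * ∑' (k : ℕ), M.G k y := by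
      intro x
      rw [tsum_eq_zero_add' ENNReal.summable, M.G_zero x]
      congr 1
      calc (∑' (k : ℕ), M.G (k+1) x) = ∑' k, ∑' y, ENNReal.ofReal (M.P x y) * M.G k y :=
            tsum_congr fun k => M.G_succ k x
        _ = ∑' y, ∑' k, ENNReal.ofReal (M.P x y) * M.G k y := ENNReal.tsum_comm
        _ = ∑' y, ENNReal.ofReal (M.P x y) * ∑' (k : ℕ), M.G k y :=
            tsum_congr fun y => ENNReal.tsum_mul_left
    set f : M.X → ℝ := fun x => (∑' (k : ℕ), M.G k x).toReal with hfdef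
    have hZpos : ∀ x, 0 < ∑' (k : ℕ), M.G k x := by
      intro x
      have h1 : ENNReal.ofReal (1 / M.γ x) ≤ ∑' (k : ℕ), M.G k x := by
        rw [hrec x]; exact le_self_add
      exact lt_of_lt_of_le (ENNReal.ofReal_pos.mpr (one_div_pos.mpr (M.γ_pos x))) h1
    have hfpos : ∀ x, 0 < f x := fun x => ENNReal.toReal_pos (hZpos x).ne' (hZt x)
    have hsumfin : ∀ x, (∑' y, ENNReal.ofReal (M.P x y) * ∑' (k : ℕ), M.G k y) ≠ ⊤ := by
      intro x hcon
      exact hZt x (by rw [hrec x, hcon, add_top])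
    have hsummable : ∀ x, Summable fun y => M.P x y * f y := by
      intro x
      refine (ENNReal.summable_toReal (hsumfin x)).congr fun y => ?_
      rw [ENNReal.toReal_mul, ENNReal.toReal_ofReal (M.P_nonneg x y)]
    have hid : ∀ x, f x = 1 / M.γ x + ∑' y, M.P x y * f y := by
      intro x
      have h1 := congrArg ENNReal.toReal (hrec x)
      rw [ENNReal.toReal_add ENNReal.ofReal_ne_top (hsumfin x),
        ENNReal.toReal_ofReal (one_div_nonneg.mpr (M.γ_pos x).le)] at h1
      rw [ENNReal.tsum_toReal_eq fun y =>
        ENNReal.mul_ne_top ENNReal.ofReal_ne_top (hZt y)] at h1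
      have h2 : (∑' y, (ENNReal.ofReal (M.P x y) * ∑' (k : ℕ), M.G k y).toReal)
          = ∑' y, M.P x y * f y :=
        tsum_congr fun y => by
          rw [ENNReal.toReal_mul, ENNReal.toReal_ofReal (M.P_nonneg x y)]
      rw [h2] at h1
      exact h1
    have hconv : ∀ x, (fun y => if y = x then 0 else M.Γ x y * f y)
        = fun y => M.γ x * (M.P x y * f y) := by
      intro x
      have hγ := (M.γ_pos x).ne'
      funext y
      rw [P]
      split
      · simp
      · field_simp
    refine ⟨f, 1, ⟨fun x => ENNReal.toReal_nonneg, fun x => ?_⟩, hfpos, one_pos, fun x => ?_⟩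
    · rw [hconv x]
      exact (hsummable x).mul_left _
    · rw [gen, hconv x, tsum_mul_left]
      have h1 := hid x
      have hγ := M.γ_pos x
      have h3 : (∑' y, M.P x y * f y) = f x - 1 / M.γ x := by linarith
      rw [h3]
      have h4 : M.γ x * (f x - 1 / M.γ x) - M.γ x * f x = -1 := by
        field_simp
        ring
      linarith
end

section
/- Suppose the embedded jump chain is recurrent. Let f ∈ Dom_+(Γ) with f → ∞ and assume there exist constants a > 0, c > 0, ε > 0 and r > 1 such that f^r ∈ Dom_+(Γ), Γf(x) ≥ −ε for all x ∉ {f ≤ a}, and Γf^r(x) ≤ c·f(x)^{r−1} for all x ∉ {f ≤ a}. Then the chain does not implode towards {f ≤ a}: there is no constant K > 0 such that E_x(τ_{{f ≤ a}}) ≤ K for all x ∉ {f ≤ a}. -/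
open MeasureTheory Set Filter
open scoped Classical ENNReal NNReal

namespace CTMCProof

open CTMC

variable (M : CTMC)

lemma P_nonneg (x y : M.X) : 0 ≤ M.P x y := by
  unfold CTMC.P
  split
  · exact le_refl 0
  · exact div_nonneg (M.Γ_offdiag_nonneg x y ‹_›) (M.γ_pos x).le

lemma hasSum_P (x : M.X) : HasSum (M.P x) 1 := by
  have h := (M.γ_sum x).div_const (M.γ x)
  rw [div_self (M.γ_pos x).ne'] at h
  have : (fun y => (if y = x then (0:ℝ) else M.Γ x y) / M.γ x) = M.P x := by
    funext y
    unfold CTMC.P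
    split <;> simp
  rwa [this] at h

lemma tsum_P (x : M.X) : ∑' y, M.P x y = 1 := (hasSum_P M x).tsum_eq

/-- the alive-mass function: `th M x0 S k y` is the probability that the chain
starting at `x0` stays in `S` for its first `k` jumps... (at jump `k` it is at `y`,
with jumps `0,...,k-1` in `S`). -/
noncomputable def th (x0 : M.X) (S : Finset M.X) : ℕ → M.X → ℝ
  | 0 => fun y => if y = x0 then 1 else 0
  | k+1 => fun y => ∑ x ∈ S, th x0 S k x * M.P x y

lemma th_nonneg (x0 : M.X) (S : Finset M.X) (k : ℕ) (y : M.X) : 0 ≤ th M x0 S k y := by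
  induction k generalizing y with
  | zero =>
    unfold th; split <;> norm_num
  | succ k ih =>
    unfold th
    exact Finset.sum_nonneg fun x _ => mul_nonneg (ih x) (P_nonneg M x y)

/-- prepend a value to a sequence -/
def cons {α : Type*} (x : α) (g : ℕ → α) : ℕ → α
  | 0 => x
  | j+1 => g j

@[simp] lemma cons_zero {α : Type*} (x : α) (g : ℕ → α) : cons x g 0 = x := rfl
@[simp] lemma cons_succ {α : Type*} (x : α) (g : ℕ → α) (j : ℕ) : cons x g (j+1) = g j := rfl

/-- cylinder-type event: first `k` jumps in `S`, then the jumps follow `path`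
for `m` more steps, with holding-time lower bounds `t`. -/
def ev (S : Finset M.X) (k m : ℕ) (path : ℕ → M.X) (t : ℕ → ℝ) : Set M.Ω :=
  {ω | (∀ i, i < k → M.jump i ω ∈ S) ∧ (∀ j, j ≤ m → M.jump (k + j) ω = path j)
    ∧ (∀ j, j < m → t j < M.hold (k + j) ω)}

lemma meas_mem_S (S : Finset M.X) (i : ℕ) : MeasurableSet {ω | M.jump i ω ∈ S} := by
  have : {ω | M.jump i ω ∈ S} = ⋃ x ∈ S, {ω | M.jump i ω = x} := by
    ext ω; simp
  rw [this]
  exact S.measurableSet_biUnion fun x _ => M.jump_meas i x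

lemma meas_ev (S : Finset M.X) (k m : ℕ) (path : ℕ → M.X) (t : ℕ → ℝ) :
    MeasurableSet (ev M S k m path t) := by
  have h1 : MeasurableSet {ω : M.Ω | ∀ i, i < k → M.jump i ω ∈ S} := by
    have : {ω : M.Ω | ∀ i, i < k → M.jump i ω ∈ S}
        = ⋂ i, ⋂ (_ : i < k), {ω | M.jump i ω ∈ S} := by ext ω; simp
    rw [this]
    exact MeasurableSet.iInter fun i => MeasurableSet.iInter fun _ => meas_mem_S M S i
  have h2 : MeasurableSet {ω : M.Ω | ∀ j, j ≤ m → M.jump (k + j) ω = path j} := by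
    have : {ω : M.Ω | ∀ j, j ≤ m → M.jump (k + j) ω = path j}
        = ⋂ j, ⋂ (_ : j ≤ m), {ω | M.jump (k + j) ω = path j} := by ext ω; simp
    rw [this]
    exact MeasurableSet.iInter fun j => MeasurableSet.iInter fun _ => M.jump_meas _ _
  have h3 : MeasurableSet {ω : M.Ω | ∀ j, j < m → t j < M.hold (k + j) ω} := by
    have : {ω : M.Ω | ∀ j, j < m → t j < M.hold (k + j) ω}
        = ⋂ j, ⋂ (_ : j < m), (M.hold (k + j)) ⁻¹' (Set.Ioi (t j)) := by
      ext ω; simp [Set.mem_preimage]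
    rw [this]
    exact MeasurableSet.iInter fun j => MeasurableSet.iInter fun _ =>
      (M.hold_meas (k + j)) measurableSet_Ioi
  exact (h1.inter (h2.inter h3))

/-- the fundamental law of the process, in averaged form -/
lemma laws (x0 : M.X) (S : Finset M.X) (k : ℕ) :
    ∀ (m : ℕ) (path : ℕ → M.X) (t : ℕ → ℝ), (∀ j, 0 ≤ t j) →
    M.μ x0 (ev M S k m path t)
      = ENNReal.ofReal (th M x0 S k (path 0) *
          ∏ j ∈ Finset.range m, (M.P (path j) (path (j+1))
            * Real.exp (-(M.γ (path j)) * t j))) := by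
  induction k with
  | zero =>
    intro m path t ht
    have hev : ev M S 0 m path t
        = {ω | (∀ j, j ≤ m → M.jump j ω = path j) ∧ (∀ j, j < m → t j < M.hold j ω)} := by
      ext ω
      simp [ev]
    by_cases hp : path 0 = x0
    · rw [hev]
      have hlaw := M.law x0 m path t hp ht
      have hP : (fun j => (if path (j+1) = path j then (0:ℝ)
          else M.Γ (path j) (path (j+1)) / M.γ (path j)) * Real.exp (-(M.γ (path j)) * t j))
          = fun j => M.P (path j) (path (j+1)) * Real.exp (-(M.γ (path j)) * t j) := rfl
      rw [hP] at hlaw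
      rw [hlaw]
      have : th M x0 S 0 (path 0) = 1 := by unfold th; rw [if_pos hp]
      rw [this, one_mul]
    · have hsub : ev M S 0 m path t ⊆ {ω | M.jump 0 ω = x0}ᶜ := by
        intro ω hω
        have := hω.2.1 0 (Nat.zero_le m)
        simp only [Nat.add_zero, Nat.zero_add] at this
        simp only [Set.mem_compl_iff, Set.mem_setOf_eq, this]
        exact fun h => hp (h ▸ rfl)
      have hc : M.μ x0 ({ω | M.jump 0 ω = x0}ᶜ) = 0 := by
        rw [MeasureTheory.prob_compl_eq_zero_iff (M.jump_meas 0 x0)]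
        exact M.start x0
      have h0 : M.μ x0 (ev M S 0 m path t) = 0 := MeasureTheory.measure_mono_null hsub hc
      rw [h0]
      have : th M x0 S 0 (path 0) = 0 := by unfold th; rw [if_neg hp]
      rw [this, zero_mul, ENNReal.ofReal_zero]
  | succ k ih =>
    intro m path t ht
    have hdec : ev M S (k+1) m path t
        = ⋃ x ∈ S, ev M S k (m+1) (cons x path) (cons 0 t) := by
      ext ω
      constructor
      · intro hω
        obtain ⟨h1, h2, h3⟩ := hω
        refine Set.mem_biUnion (h1 k (Nat.lt_succ_self k)) ?_
        refine ⟨fun i hi => h1 i (Nat.lt_succ_of_lt hi), ?_, ?_⟩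
        · intro j hj
          cases j with
          | zero => simp
          | succ j' =>
            simp only [cons_succ]
            have : k + (j' + 1) = (k+1) + j' := by omega
            rw [this]
            exact h2 j' (by omega)
        · intro j hj
          cases j with
          | zero =>
            simp only [cons_zero]
            exact M.hold_pos _ _
          | succ j' =>
            simp only [cons_succ]
            have : k + (j' + 1) = (k+1) + j' := by omega
            rw [this]
            exact h3 j' (by omega)
      · intro hω
        obtain ⟨x, hxS, h⟩ := Set.mem_iUnion₂.1 hω
        obtain ⟨h1, h2, h3⟩ := h
        have hjk : M.jump k ω = x := by
          have := h2 0 (Nat.zero_le _)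
          simpa using this
        refine ⟨?_, ?_, ?_⟩
        · intro i hi
          rcases Nat.lt_succ_iff_lt_or_eq.1 hi with hlt | heq
          · exact h1 i hlt
          · rw [heq, hjk]; exact hxS
        · intro j hj
          have : (k+1) + j = k + (j+1) := by omega
          rw [this]
          exact h2 (j+1) (by omega)
        · intro j hj
          have : (k+1) + j = k + (j+1) := by omega
          rw [this]
          exact h3 (j+1) (by omega)
    rw [hdec]
    have hdisj : (S : Set M.X).PairwiseDisjoint
        (fun x => ev M S k (m+1) (cons x path) (cons 0 t)) := by
      intro x hx y hy hxy
      refine Set.disjoint_left.2 fun ω hωx hωy => hxy ?_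
      have h1 : M.jump (k+0) ω = x := hωx.2.1 0 (Nat.zero_le _)
      have h2 : M.jump (k+0) ω = y := hωy.2.1 0 (Nat.zero_le _)
      rw [← h1, h2]
    rw [MeasureTheory.measure_biUnion_finset hdisj
      (fun x _ => meas_ev M S k (m+1) (cons x path) (cons 0 t))]
    have hterm : ∀ x ∈ S, M.μ x0 (ev M S k (m+1) (cons x path) (cons 0 t))
        = ENNReal.ofReal ((th M x0 S k x * M.P x (path 0)) *
            ∏ j ∈ Finset.range m, (M.P (path j) (path (j+1))
              * Real.exp (-(M.γ (path j)) * t j))) := by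
      intro x hx
      rw [ih (m+1) (cons x path) (cons 0 t) (fun j => by cases j <;> simp [ht _])]
      congr 1
      rw [Finset.prod_range_succ']
      simp only [cons_zero, cons_succ]
      rw [mul_zero, Real.exp_zero, mul_one]
      ring
    rw [Finset.sum_congr rfl hterm]
    rw [← ENNReal.ofReal_sum_of_nonneg (fun x hx => by
      apply mul_nonneg (mul_nonneg (th_nonneg M x0 S k x) (P_nonneg M x _))
      exact Finset.prod_nonneg fun j _ => mul_nonneg (P_nonneg M _ _) (Real.exp_pos _).le)]
    congr 1
    rw [← Finset.sum_mul]
    rfl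

end CTMCProof
namespace CTMCProof

open CTMC MeasureTheory Set

variable (M : CTMC)

/-- event: first `k` jumps in `S`, `k`-th jump at `y` -/
def Dev (S : Finset M.X) (k : ℕ) (y : M.X) : Set M.Ω :=
  {ω | (∀ i, i < k → M.jump i ω ∈ S) ∧ M.jump k ω = y}

lemma meas_Dev (S : Finset M.X) (k : ℕ) (y : M.X) : MeasurableSet (Dev M S k y) := by
  have h1 : MeasurableSet {ω : M.Ω | ∀ i, i < k → M.jump i ω ∈ S} := by
    have : {ω : M.Ω | ∀ i, i < k → M.jump i ω ∈ S}
        = ⋂ i, ⋂ (_ : i < k), {ω | M.jump i ω ∈ S} := by ext ω; simp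
    rw [this]
    exact MeasurableSet.iInter fun i => MeasurableSet.iInter fun _ => meas_mem_S M S i
  exact h1.inter (M.jump_meas k y)

lemma laws_one (x0 : M.X) (S : Finset M.X) (k : ℕ) (y : M.X) (s : ℝ) (hs : 0 ≤ s) :
    M.μ x0 (Dev M S k y ∩ {ω | s < M.hold k ω})
      = ENNReal.ofReal (th M x0 S k y * Real.exp (-(M.γ y) * s)) := by
  have hdec : Dev M S k y ∩ {ω | s < M.hold k ω}
      = ⋃ z : M.X, ev M S k 1 (cons y (fun _ => z)) (fun _ => s) := by
    ext ω
    constructor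
    · rintro ⟨⟨h1, h2⟩, h3⟩
      refine Set.mem_iUnion.2 ⟨M.jump (k+1) ω, h1, ?_, ?_⟩
      · intro j hj
        interval_cases j
        · simpa using h2
        · simp
      · intro j hj
        interval_cases j
        simpa using h3
    · rintro hω
      obtain ⟨z, h1, h2, h3⟩ := Set.mem_iUnion.1 hω
      refine ⟨⟨h1, ?_⟩, ?_⟩
      · simpa using h2 0 (by norm_num)
      · simpa using h3 0 (by norm_num)
  rw [hdec]
  have hdisj : Pairwise (Function.onFun Disjoint
      fun z => ev M S k 1 (cons y (fun _ => z)) (fun _ => s)) := by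
    intro z z' hzz'
    refine Set.disjoint_left.2 fun ω hω hω' => hzz' ?_
    have h1 : M.jump (k+1) ω = z := by simpa using hω.2.1 1 le_rfl
    have h2 : M.jump (k+1) ω = z' := by simpa using hω'.2.1 1 le_rfl
    rw [← h1, h2]
  rw [measure_iUnion hdisj (fun z => meas_ev M S k 1 _ _)]
  have hterm : ∀ z : M.X, M.μ x0 (ev M S k 1 (cons y (fun _ => z)) (fun _ => s))
      = ENNReal.ofReal (th M x0 S k y * Real.exp (-(M.γ y) * s)) * ENNReal.ofReal (M.P y z) := by
    intro z
    rw [laws M x0 S k 1 (cons y (fun _ => z)) (fun _ => s) (fun _ => hs)]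
    rw [Finset.prod_range_one]
    simp only [cons_zero, cons_succ]
    rw [← ENNReal.ofReal_mul (mul_nonneg (th_nonneg M x0 S k y) (Real.exp_pos _).le)]
    congr 1
    ring
  rw [tsum_congr hterm, ENNReal.tsum_mul_left]
  rw [← ENNReal.ofReal_tsum_of_nonneg (P_nonneg M y) (hasSum_P M y).summable]
  rw [tsum_P, ENNReal.ofReal_one, mul_one]

lemma lint_exp {c : ℝ} (hc : 0 < c) :
    ∫⁻ t in Set.Ioi (0:ℝ), ENNReal.ofReal (Real.exp (-c * t)) = ENNReal.ofReal (1/c) := by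
  rw [← MeasureTheory.ofReal_integral_eq_lintegral_ofReal (exp_neg_integrableOn_Ioi 0 hc)
    (MeasureTheory.ae_of_all _ fun t => (Real.exp_pos _).le)]
  congr 1
  have hderiv : ∀ x ∈ Set.Ici (0:ℝ),
      HasDerivAt (fun x => -Real.exp (-c*x)/c) (Real.exp (-c*x)) x := by
    intro x _
    have h1 : HasDerivAt (fun y : ℝ => -c * y) (-c) x := by
      simpa using (hasDerivAt_id x).const_mul (-c)
    have h2 := (h1.exp.neg).div_const c
    exact h2.congr_deriv (by rw [div_eq_iff hc.ne']; ring)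
  have htend : Filter.Tendsto (fun x => -Real.exp (-c*x)/c) Filter.atTop (nhds 0) := by
    have : Filter.Tendsto (fun x => -Real.exp (-c*x)/c) Filter.atTop (nhds (-0/c)) := by
      refine Filter.Tendsto.div_const (Filter.Tendsto.neg ?_) _
      exact Real.tendsto_exp_atBot.comp
        (Filter.tendsto_id.const_mul_atTop_of_neg (neg_neg_iff_pos.2 hc))
    simpa using this
  have := MeasureTheory.integral_Ioi_of_hasDerivAt_of_tendsto' hderiv
    (exp_neg_integrableOn_Ioi 0 hc) htend
  rw [this]
  simp [Real.exp_zero]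
  ring

lemma lintegral_hold (x0 : M.X) (S : Finset M.X) (k : ℕ) (y : M.X) :
    ∫⁻ ω, ENNReal.ofReal ((Dev M S k y).indicator (M.hold k) ω) ∂ M.μ x0
      = ENNReal.ofReal (th M x0 S k y / M.γ y) := by
  have hD := meas_Dev M S k y
  have hnn : (0 : M.Ω → ℝ) ≤ᵐ[M.μ x0] (Dev M S k y).indicator (M.hold k) :=
    MeasureTheory.ae_of_all _ fun ω => Set.indicator_nonneg (fun ω' _ => (M.hold_pos k ω').le) ω
  have hmeas : Measurable ((Dev M S k y).indicator (M.hold k)) := (M.hold_meas k).indicator hD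
  rw [MeasureTheory.lintegral_eq_lintegral_meas_lt _ hnn hmeas.aemeasurable]
  have hset : ∀ t ∈ Set.Ioi (0:ℝ),
      M.μ x0 {ω | t < (Dev M S k y).indicator (M.hold k) ω}
        = ENNReal.ofReal (th M x0 S k y * Real.exp (-(M.γ y) * t)) := by
    intro t ht
    have : {ω | t < (Dev M S k y).indicator (M.hold k) ω}
        = Dev M S k y ∩ {ω | t < M.hold k ω} := by
      ext ω
      by_cases hω : ω ∈ Dev M S k y
      · simp [Set.indicator_of_mem hω, hω]
      · simp only [Set.mem_setOf_eq, Set.indicator_of_notMem hω, Set.mem_inter_iff]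
        constructor
        · intro h
          exact absurd (h.trans (Set.mem_Ioi.1 ht)) (lt_irrefl t)
        · rintro ⟨hd, _⟩
          exact absurd hd hω
    rw [this, laws_one M x0 S k y t (le_of_lt (Set.mem_Ioi.1 ht))]
  rw [MeasureTheory.setLIntegral_congr_fun measurableSet_Ioi
    hset]
  have hexp : ∀ t : ℝ, ENNReal.ofReal (th M x0 S k y * Real.exp (-(M.γ y) * t))
      = ENNReal.ofReal (th M x0 S k y) * ENNReal.ofReal (Real.exp (-(M.γ y) * t)) := by
    intro t
    exact ENNReal.ofReal_mul (th_nonneg M x0 S k y)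
  simp only [hexp]
  have hm : Measurable fun t : ℝ => ENNReal.ofReal (Real.exp (-(M.γ y) * t)) := by
    apply Measurable.ennreal_ofReal
    fun_prop
  rw [MeasureTheory.lintegral_const_mul _ hm]
  rw [lint_exp (M.γ_pos y)]
  rw [← ENNReal.ofReal_mul (th_nonneg M x0 S k y), mul_one_div]

/-- all jumps up to index `k` in `S` -/
def Ak (S : Finset M.X) (k : ℕ) : Set M.Ω := {ω | ∀ i, i ≤ k → M.jump i ω ∈ S}

lemma meas_Ak (S : Finset M.X) (k : ℕ) : MeasurableSet (Ak M S k) := by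
  have : Ak M S k = ⋂ i, ⋂ (_ : i ≤ k), {ω | M.jump i ω ∈ S} := by ext ω; simp [Ak]
  rw [this]
  exact MeasurableSet.iInter fun i => MeasurableSet.iInter fun _ => meas_mem_S M S i

lemma Ak_indicator_decomp (S : Finset M.X) (k : ℕ) (ω : M.Ω) :
    (Ak M S k).indicator (M.hold k) ω
      = ∑ y ∈ S, (Dev M S k y).indicator (M.hold k) ω := by
  by_cases h : ω ∈ Ak M S k
  · have hk : M.jump k ω ∈ S := h k le_rfl
    rw [Set.indicator_of_mem h]
    rw [Finset.sum_eq_single_of_mem (M.jump k ω) hk]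
    · have hmem : ω ∈ Dev M S k (M.jump k ω) := ⟨fun i hi => h i hi.le, rfl⟩
      rw [Set.indicator_of_mem hmem]
    · intro y _ hy
      exact Set.indicator_of_notMem (fun hω => hy hω.2.symm) _
  · rw [Set.indicator_of_notMem h]
    symm
    apply Finset.sum_eq_zero
    intro y hyS
    apply Set.indicator_of_notMem
    rintro ⟨h1, h2⟩
    exact h fun i hi => by
      rcases Nat.lt_or_ge i k with hlt | hge
      · exact h1 i hlt
      · have : i = k := le_antisymm hi hge
        rw [this, h2]; exact hyS

noncomputable def gfun (S : Finset M.X) (n : ℕ) (ω : M.Ω) : ℝ :=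
  ∑ k ∈ Finset.range n, (Ak M S k).indicator (M.hold k) ω

lemma lint_g (x0 : M.X) (S : Finset M.X) (n : ℕ) :
    ∫⁻ ω, ENNReal.ofReal (gfun M S n ω) ∂ M.μ x0
      = ENNReal.ofReal (∑ k ∈ Finset.range n, ∑ y ∈ S, th M x0 S k y / M.γ y) := by
  have hnn : ∀ (k : ℕ) (ω : M.Ω), 0 ≤ (Ak M S k).indicator (M.hold k) ω :=
    fun k ω => Set.indicator_nonneg (fun ω' _ => (M.hold_pos k ω').le) ω
  have h1 : ∀ ω : M.Ω, ENNReal.ofReal (gfun M S n ω)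
      = ∑ k ∈ Finset.range n, ∑ y ∈ S,
          ENNReal.ofReal ((Dev M S k y).indicator (M.hold k) ω) := by
    intro ω
    rw [gfun, ENNReal.ofReal_sum_of_nonneg (fun k _ => hnn k ω)]
    refine Finset.sum_congr rfl fun k _ => ?_
    rw [Ak_indicator_decomp, ENNReal.ofReal_sum_of_nonneg (fun y _ =>
      Set.indicator_nonneg (fun ω' _ => (M.hold_pos k ω').le) ω)]
  simp only [h1]
  rw [MeasureTheory.lintegral_finset_sum _ (fun k _ => Finset.measurable_sum _ (fun y _ =>
    ((M.hold_meas k).indicator (meas_Dev M S k y)).ennreal_ofReal))]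
  have h2 : ∀ k ∈ Finset.range n,
      ∫⁻ ω, (∑ y ∈ S, ENNReal.ofReal ((Dev M S k y).indicator (M.hold k) ω)) ∂ M.μ x0
        = ENNReal.ofReal (∑ y ∈ S, th M x0 S k y / M.γ y) := by
    intro k _
    rw [MeasureTheory.lintegral_finset_sum _ (fun y _ =>
      ((M.hold_meas k).indicator (meas_Dev M S k y)).ennreal_ofReal)]
    rw [Finset.sum_congr rfl (fun y _ => lintegral_hold M x0 S k y)]
    rw [← ENNReal.ofReal_sum_of_nonneg (fun y _ =>
      div_nonneg (th_nonneg M x0 S k y) (M.γ_pos y).le)]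
  rw [Finset.sum_congr rfl h2]
  rw [← ENNReal.ofReal_sum_of_nonneg (fun k _ => Finset.sum_nonneg (fun y _ =>
    div_nonneg (th_nonneg M x0 S k y) (M.γ_pos y).le))]

end CTMCProof
namespace CTMCProof

open CTMC MeasureTheory Set

variable (M : CTMC)

lemma J_zero (ω : M.Ω) : M.J 0 ω = 0 := by simp [CTMC.J]

lemma J_mono (ω : M.Ω) {m m' : ℕ} (h : m ≤ m') : M.J m ω ≤ M.J m' ω :=
  Finset.sum_le_sum_of_subset_of_nonneg (Finset.range_subset_range.2 h)
    (fun k _ _ => (M.hold_pos k ω).le)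

lemma J_lt (ω : M.Ω) {m m' : ℕ} (h : m < m') : M.J m ω < M.J m' ω := by
  have h1 : M.J m ω < M.J (m+1) ω := by
    unfold CTMC.J
    rw [Finset.sum_range_succ]
    exact lt_add_of_pos_right _ (M.hold_pos m ω)
  exact lt_of_lt_of_le h1 (J_mono M ω h)

lemma pos_eq (ω : M.Ω) {j : ℕ} {s : ℝ} (h1 : M.J j ω ≤ s) (h2 : s < M.J (j+1) ω) :
    M.pos s ω = some (M.jump j ω) := by
  unfold CTMC.pos
  have hex : ∃ n, M.J n ω ≤ s ∧ s < M.J (n+1) ω := ⟨j, h1, h2⟩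
  rw [dif_pos hex]
  have hch := hex.choose_spec
  have heq : hex.choose = j := by
    rcases lt_trichotomy hex.choose j with hlt | heq | hgt
    · have := (J_mono M ω (Nat.succ_le_of_lt hlt)).trans h1
      linarith [hch.2]
    · exact heq
    · have := (J_mono M ω (Nat.succ_le_of_lt hgt)).trans hch.1
      linarith
  rw [heq]

lemma tau_ge_g (f : M.X → ℝ) (a : ℝ) (S : Finset M.X) (hSa : ∀ x ∈ S, a < f x)
    (n : ℕ) (ω : M.Ω) :
    ENNReal.ofReal (gfun M S n ω) ≤ M.tau {y | f y ≤ a} ω := by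
  unfold CTMC.tau
  apply le_sInf
  rintro v ⟨s, ⟨hs0, y, hyA, hpos⟩, rfl⟩
  apply ENNReal.ofReal_le_ofReal
  by_contra hgs
  push_neg at hgs
  have hgJ : gfun M S n ω ≤ M.J n ω := by
    apply Finset.sum_le_sum
    intro k _
    exact Set.indicator_le_self' (fun x _ => (M.hold_pos k x).le) ω
  set j := Nat.findGreatest (fun i => M.J i ω ≤ s) n with hj
  have hPj : M.J j ω ≤ s :=
    Nat.findGreatest_spec (P := fun i => M.J i ω ≤ s) (Nat.zero_le n)
      (show M.J 0 ω ≤ s by rw [J_zero M ω]; exact hs0)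
  have hjn : j < n := by
    rcases Nat.lt_or_ge j n with h | h
    · exact h
    · have hjn' : j ≤ n := Nat.findGreatest_le n
      have hje : j = n := le_antisymm hjn' h
      rw [hje] at hPj
      linarith
  have hPj1 : s < M.J (j+1) ω := by
    have h := Nat.findGreatest_is_greatest (Nat.lt_succ_self j) hjn
    exact not_le.1 h
  have hin : ∀ i, i ≤ j → M.jump i ω ∈ S := by
    by_contra hcon
    push_neg at hcon
    obtain ⟨i1, hi1j, hi1⟩ := hcon
    have hex : ∃ i, M.jump i ω ∉ S := ⟨i1, hi1⟩
    have hi0 : M.jump (Nat.find hex) ω ∉ S := Nat.find_spec hex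
    set i0 := Nat.find hex with hi0def
    have hi0j : i0 ≤ j := le_trans (Nat.find_min' hex hi1) hi1j
    have hgle : gfun M S n ω ≤ M.J i0 ω := by
      have hterm : ∀ k ∈ Finset.range n, (Ak M S k).indicator (M.hold k) ω
          ≤ if k < i0 then M.hold k ω else 0 := by
        intro k _
        by_cases hk : k < i0
        · rw [if_pos hk]
          exact Set.indicator_le_self' (fun x _ => (M.hold_pos k x).le) ω
        · rw [if_neg hk]
          have hnA : ω ∉ Ak M S k := fun hAk => hi0 (hAk i0 (Nat.le_of_not_lt hk))
          rw [Set.indicator_of_notMem hnA]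
      calc gfun M S n ω ≤ ∑ k ∈ Finset.range n, if k < i0 then M.hold k ω else 0 :=
            Finset.sum_le_sum hterm
        _ = ∑ k ∈ Finset.range i0, M.hold k ω := by
            rw [← Finset.sum_filter]
            apply Finset.sum_congr _ (fun _ _ => rfl)
            ext x
            simp only [Finset.mem_filter, Finset.mem_range]
            constructor
            · rintro ⟨_, h2⟩; exact h2
            · intro hx
              exact ⟨lt_of_lt_of_le hx (le_trans hi0j (le_of_lt hjn)), hx⟩
        _ = M.J i0 ω := rfl
    have hJle : M.J i0 ω ≤ s := le_trans (J_mono M ω hi0j) hPj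
    linarith
  have hposj : M.pos s ω = some (M.jump j ω) := pos_eq M ω hPj hPj1
  have hyj : y = M.jump j ω := by
    rw [hpos] at hposj
    exact Option.some.inj hposj
  have h1 : a < f y := hyj ▸ hSa _ (hin j le_rfl)
  have h2 : f y ≤ a := hyA
  linarith

lemma Tn_le_K (x0 : M.X) (S : Finset M.X) (f : M.X → ℝ) (a : ℝ)
    (hSa : ∀ x ∈ S, a < f x) (K : ℝ) (hK0 : 0 ≤ K)
    (hb : ∫⁻ ω, M.tau {y | f y ≤ a} ω ∂ M.μ x0 ≤ ENNReal.ofReal K) (n : ℕ) :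
    ∑ k ∈ Finset.range n, ∑ y ∈ S, th M x0 S k y / M.γ y ≤ K := by
  have h1 := (lint_g M x0 S n).symm
  have h2 : ∫⁻ ω, ENNReal.ofReal (gfun M S n ω) ∂ M.μ x0
      ≤ ∫⁻ ω, M.tau {y | f y ≤ a} ω ∂ M.μ x0 :=
    lintegral_mono (fun ω => tau_ge_g M f a S hSa n ω)
  have h3 : ENNReal.ofReal (∑ k ∈ Finset.range n, ∑ y ∈ S, th M x0 S k y / M.γ y)
      ≤ ENNReal.ofReal K := by
    rw [h1]
    exact h2.trans hb
  exact (ENNReal.ofReal_le_ofReal_iff hK0).1 h3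

end CTMCProof
namespace CTMCProof

open CTMC

variable (M : CTMC)

lemma P_mul (x : M.X) (h : M.X → ℝ) :
    (fun y => M.P x y * h y) = fun y => (if y = x then 0 else M.Γ x y * h y) / M.γ x := by
  funext y
  unfold CTMC.P
  split
  · simp
  · rw [div_mul_eq_mul_div]

lemma summable_P_mul (x : M.X) (h : M.X → ℝ)
    (hx : Summable (fun y => if y = x then 0 else M.Γ x y * h y)) :
    Summable (fun y => M.P x y * h y) := by
  rw [P_mul]
  exact hx.div_const _

lemma tsum_P_mul (x : M.X) (h : M.X → ℝ)
    (hx : Summable (fun y => if y = x then 0 else M.Γ x y * h y)) :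
    ∑' y, M.P x y * h y = h x + M.gen h x / M.γ x := by
  rw [P_mul, tsum_div_const]
  unfold CTMC.gen
  have hγ : M.γ x ≠ 0 := (M.γ_pos x).ne'
  field_simp
  ring

lemma th_mul_eq (x0 : M.X) (S : Finset M.X) (k : ℕ) (h : M.X → ℝ) :
    (fun y => th M x0 S (k+1) y * h y)
      = fun y => ∑ x ∈ S, th M x0 S k x * (M.P x y * h y) := by
  funext y
  show (∑ x ∈ S, th M x0 S k x * M.P x y) * h y = _
  rw [Finset.sum_mul]
  exact Finset.sum_congr rfl fun x _ => by ring

lemma summable_th_mul (x0 : M.X) (S : Finset M.X) (k : ℕ) (h : M.X → ℝ)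
    (hsum : ∀ x ∈ S, Summable (fun y => M.P x y * h y)) :
    Summable (fun y => th M x0 S (k+1) y * h y) := by
  rw [th_mul_eq]
  exact summable_sum fun x hx => ((hsum x hx).mul_left _)

lemma step_id (x0 : M.X) (S : Finset M.X) (k : ℕ) (h : M.X → ℝ)
    (hsum : ∀ x ∈ S, Summable (fun y => M.P x y * h y)) :
    ∑ y ∈ S, th M x0 S (k+1) y * h y
      + ∑' (y : ↑((S : Set M.X))ᶜ), th M x0 S (k+1) (y : M.X) * h y
      = ∑ x ∈ S, th M x0 S k x * ∑' y, M.P x y * h y := by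
  rw [(summable_th_mul M x0 S k h hsum).sum_add_tsum_compl]
  rw [tsum_congr (fun y => congrFun (th_mul_eq M x0 S k h) y)]
  rw [Summable.tsum_finsetSum (fun x hx => ((hsum x hx).mul_left _))]
  exact Finset.sum_congr rfl fun x _ => tsum_mul_left

lemma step_le (x0 : M.X) (S : Finset M.X) (g : M.X → ℝ) (C : ℝ)
    (hdom : ∀ x ∈ S, Summable fun y => M.P x y * g y)
    (hdrift : ∀ x ∈ S, ∑' y, M.P x y * g y ≤ g x + C / M.γ x) (k : ℕ) :
    ∑ y ∈ S, th M x0 S (k+1) y * g y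
      + ∑' (y : ↑((S : Set M.X))ᶜ), th M x0 S (k+1) (y : M.X) * g y
      ≤ ∑ y ∈ S, th M x0 S k y * g y + C * ∑ y ∈ S, th M x0 S k y / M.γ y := by
  rw [step_id M x0 S k g hdom]
  have h1 : ∑ x ∈ S, th M x0 S k x * ∑' y, M.P x y * g y
      ≤ ∑ x ∈ S, th M x0 S k x * (g x + C / M.γ x) :=
    Finset.sum_le_sum fun x hx =>
      mul_le_mul_of_nonneg_left (hdrift x hx) (th_nonneg M x0 S k x)
  refine h1.trans (le_of_eq ?_)
  rw [Finset.mul_sum, ← Finset.sum_add_distrib]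
  exact Finset.sum_congr rfl fun x _ => by ring

lemma step_ge (x0 : M.X) (S : Finset M.X) (g : M.X → ℝ) (ε : ℝ)
    (hdom : ∀ x ∈ S, Summable fun y => M.P x y * g y)
    (hdrift : ∀ x ∈ S, g x - ε / M.γ x ≤ ∑' y, M.P x y * g y) (k : ℕ) :
    ∑ y ∈ S, th M x0 S k y * g y - ε * ∑ y ∈ S, th M x0 S k y / M.γ y
      ≤ ∑ y ∈ S, th M x0 S (k+1) y * g y
        + ∑' (y : ↑((S : Set M.X))ᶜ), th M x0 S (k+1) (y : M.X) * g y := by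
  rw [step_id M x0 S k g hdom]
  have h1 : ∑ x ∈ S, th M x0 S k x * (g x - ε / M.γ x)
      ≤ ∑ x ∈ S, th M x0 S k x * ∑' y, M.P x y * g y :=
    Finset.sum_le_sum fun x hx =>
      mul_le_mul_of_nonneg_left (hdrift x hx) (th_nonneg M x0 S k x)
  refine le_trans (le_of_eq ?_) h1
  rw [Finset.mul_sum, ← Finset.sum_sub_distrib]
  exact Finset.sum_congr rfl fun x _ => by ring

lemma th_zero_sum (x0 : M.X) (S : Finset M.X) (hx0 : x0 ∈ S) (g : M.X → ℝ) :
    ∑ y ∈ S, th M x0 S 0 y * g y = g x0 := by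
  rw [Finset.sum_eq_single_of_mem x0 hx0]
  · show (if x0 = x0 then (1:ℝ) else 0) * g x0 = g x0
    rw [if_pos rfl, one_mul]
  · intro y _ hy
    show (if y = x0 then (1:ℝ) else 0) * g y = 0
    rw [if_neg hy, zero_mul]

end CTMCProof
namespace CTMCProof

open CTMC

variable (M : CTMC)

lemma summable_th (x0 : M.X) (S : Finset M.X) (k : ℕ) :
    Summable (fun y => th M x0 S (k+1) y) := by
  have h := summable_th_mul M x0 S k (fun _ => (1:ℝ)) (fun x _ => by
    have : (fun y => M.P x y * (1:ℝ)) = M.P x := by funext y; rw [mul_one]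
    rw [this]
    exact (hasSum_P M x).summable)
  simpa [mul_one] using h

lemma final_bound (x0 : M.X) (S : Finset M.X) (f g : M.X → ℝ)
    (a b BR CB ε K γm : ℝ)
    (hfpos : ∀ y, 0 ≤ f y) (hgpos : ∀ y, 0 ≤ g y)
    (hx0 : x0 ∈ S) (hSmem : ∀ y, y ∈ S ↔ a < f y ∧ f y ≤ b)
    (ha : 0 < a) (hε : 0 < ε) (hBR : 0 < BR) (hCB : 0 ≤ CB) (hK : 0 ≤ K)
    (hfg : ∀ y, b < f y → f y ≤ g y / BR)
    (hdomf : ∀ x ∈ S, Summable fun y => M.P x y * f y)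
    (hdomg : ∀ x ∈ S, Summable fun y => M.P x y * g y)
    (hdr1 : ∀ x ∈ S, f x - ε / M.γ x ≤ ∑' y, M.P x y * f y)
    (hdr2 : ∀ x ∈ S, ∑' y, M.P x y * g y ≤ g x + CB / M.γ x)
    (hγm : ∀ y ∈ S, M.γ y ≤ γm) (hγmpos : 0 < γm)
    (hT : ∀ n : ℕ, ∑ k ∈ Finset.range n, ∑ y ∈ S, th M x0 S k y / M.γ y ≤ K)
    (n : ℕ) (hn : 1 ≤ n) :
    f x0 ≤ b * (γm * K / n) + a + (g x0 + CB * K) / BR + ε * K := by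
  classical
  have hθnn : ∀ k y, 0 ≤ th M x0 S k y := fun k y => th_nonneg M x0 S k y
  have hUnn : ∀ k, 0 ≤ ∑ y ∈ S, th M x0 S k y / M.γ y :=
    fun k => Finset.sum_nonneg fun y _ => div_nonneg (hθnn k y) (M.γ_pos y).le
  have hTnn : ∀ m : ℕ, 0 ≤ ∑ k ∈ Finset.range m, ∑ y ∈ S, th M x0 S k y / M.γ y :=
    fun m => Finset.sum_nonneg fun k _ => hUnn k
  have hXΦnn : ∀ k, 0 ≤ ∑' (y : ↑((S : Set M.X))ᶜ), th M x0 S k (y : M.X) * f y :=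
    fun k => tsum_nonneg fun y => mul_nonneg (hθnn k y) (hfpos y)
  have hXΨnn : ∀ k, 0 ≤ ∑' (y : ↑((S : Set M.X))ᶜ), th M x0 S k (y : M.X) * g y :=
    fun k => tsum_nonneg fun y => mul_nonneg (hθnn k y) (hgpos y)
  have hXmnn : ∀ k, 0 ≤ ∑' (y : ↑((S : Set M.X))ᶜ), th M x0 S k (y : M.X) * 1 :=
    fun k => tsum_nonneg fun y => mul_nonneg (hθnn k y) zero_le_one
  have hΦnn : ∀ k, 0 ≤ ∑ y ∈ S, th M x0 S k y * f y :=
    fun k => Finset.sum_nonneg fun y _ => mul_nonneg (hθnn k y) (hfpos y)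
  have hΨnn : ∀ k, 0 ≤ ∑ y ∈ S, th M x0 S k y * g y :=
    fun k => Finset.sum_nonneg fun y _ => mul_nonneg (hθnn k y) (hgpos y)
  -- telescoped submartingale inequality for f
  have T1 : ∀ m : ℕ, f x0 ≤ (∑ y ∈ S, th M x0 S m y * f y)
      + (∑ k ∈ Finset.range m, ∑' (y : ↑((S : Set M.X))ᶜ), th M x0 S (k+1) (y : M.X) * f y)
      + ε * ∑ k ∈ Finset.range m, ∑ y ∈ S, th M x0 S k y / M.γ y := by
    intro m
    induction m with
    | zero => simp [th_zero_sum M x0 S hx0 f]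
    | succ m ih =>
      have hstep := step_ge M x0 S f ε hdomf hdr1 m
      rw [Finset.sum_range_succ, Finset.sum_range_succ, mul_add]
      linarith [ih, hstep]
  -- telescoped supermartingale inequality for g
  have T2 : ∀ m : ℕ, (∑ y ∈ S, th M x0 S m y * g y)
      + (∑ k ∈ Finset.range m, ∑' (y : ↑((S : Set M.X))ᶜ), th M x0 S (k+1) (y : M.X) * g y)
      ≤ g x0 + CB * ∑ k ∈ Finset.range m, ∑ y ∈ S, th M x0 S k y / M.γ y := by
    intro m
    induction m with
    | zero => simp [th_zero_sum M x0 S hx0 g]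
    | succ m ih =>
      have hstep := step_le M x0 S g CB hdomg hdr2 m
      rw [Finset.sum_range_succ, Finset.sum_range_succ, mul_add]
      linarith [ih, hstep]
  -- mass conservation
  have hdom1 : ∀ x ∈ S, Summable fun y => M.P x y * (1:ℝ) := fun x _ => by
    have : (fun y => M.P x y * (1:ℝ)) = M.P x := by funext y; rw [mul_one]
    rw [this]
    exact (hasSum_P M x).summable
  have hdr0 : ∀ x ∈ S, ∑' y, M.P x y * (1:ℝ) ≤ 1 + 0 / M.γ x := fun x _ => by
    have : (fun y => M.P x y * (1:ℝ)) = M.P x := by funext y; rw [mul_one]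
    rw [this, tsum_P, zero_div, add_zero]
  have T3 : ∀ m : ℕ, (∑ y ∈ S, th M x0 S m y * 1)
      + (∑ k ∈ Finset.range m, ∑' (y : ↑((S : Set M.X))ᶜ), th M x0 S (k+1) (y : M.X) * 1)
      ≤ 1 := by
    intro m
    induction m with
    | zero =>
      have h := th_zero_sum M x0 S hx0 (fun _ => (1:ℝ))
      simp only [mul_one] at h
      simp [h]
    | succ m ih =>
      have hstep := step_le M x0 S (fun _ => (1:ℝ)) 0 hdom1 hdr0 m
      rw [Finset.sum_range_succ]
      simp only [zero_mul, add_zero] at hstep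
      linarith [ih, hstep]
  -- mass is nonincreasing
  have hmassdec : ∀ k : ℕ, (∑ y ∈ S, th M x0 S (k+1) y * 1) ≤ ∑ y ∈ S, th M x0 S k y * 1 := by
    intro k
    have hstep := step_le M x0 S (fun _ => (1:ℝ)) 0 hdom1 hdr0 k
    simp only [zero_mul, add_zero] at hstep
    linarith [hstep, hXmnn (k+1)]
  have hmassmono : ∀ j k : ℕ, j ≤ k →
      (∑ y ∈ S, th M x0 S k y * 1) ≤ ∑ y ∈ S, th M x0 S j y * 1 := by
    intro j k hjk
    induction k with
    | zero =>
      have : j = 0 := Nat.le_zero.1 hjk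
      rw [this]
    | succ k ihk =>
      rcases Nat.lt_or_ge j (k+1) with h | h
      · exact (hmassdec k).trans (ihk (Nat.lt_succ_iff.1 h))
      · have : j = k+1 := le_antisymm hjk h
        rw [this]
  -- mass k ≤ γm * U k
  have hmassU : ∀ k : ℕ, (∑ y ∈ S, th M x0 S k y * 1)
      ≤ γm * ∑ y ∈ S, th M x0 S k y / M.γ y := by
    intro k
    rw [Finset.mul_sum]
    apply Finset.sum_le_sum
    intro y hy
    have hgy := M.γ_pos y
    rw [mul_one]
    have heq : γm * (th M x0 S k y / M.γ y) = th M x0 S k y * γm / M.γ y := by ring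
    rw [heq, le_div_iff₀ hgy]
    exact mul_le_mul_of_nonneg_left (hγm y hy) (hθnn k y)
  -- n * mass n ≤ γm * K
  have hmassn : (n : ℝ) * (∑ y ∈ S, th M x0 S n y * 1) ≤ γm * K := by
    have h1 : (n : ℝ) * (∑ y ∈ S, th M x0 S n y * 1)
        = ∑ k ∈ Finset.range n, (∑ y ∈ S, th M x0 S n y * 1) := by
      rw [Finset.sum_const, Finset.card_range, nsmul_eq_mul]
    rw [h1]
    have h2 : ∑ k ∈ Finset.range n, (∑ y ∈ S, th M x0 S n y * 1)
        ≤ ∑ k ∈ Finset.range n, γm * (∑ y ∈ S, th M x0 S k y / M.γ y) := by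
      apply Finset.sum_le_sum
      intro k hk
      exact (hmassmono k n (le_of_lt (Finset.mem_range.1 hk))).trans (hmassU k)
    refine h2.trans ?_
    rw [← Finset.mul_sum]
    exact mul_le_mul_of_nonneg_left (hT n) hγmpos.le
  -- exit decomposition
  have hXdec : ∀ k : ℕ,
      (∑' (y : ↑((S : Set M.X))ᶜ), th M x0 S (k+1) (y : M.X) * f y)
        ≤ a * (∑' (y : ↑((S : Set M.X))ᶜ), th M x0 S (k+1) (y : M.X) * 1)
          + (∑' (y : ↑((S : Set M.X))ᶜ), th M x0 S (k+1) (y : M.X) * g y) / BR := by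
    intro k
    have hsumf : Summable fun y : ↑((S : Set M.X))ᶜ => th M x0 S (k+1) (y : M.X) * f y :=
      (summable_th_mul M x0 S k f hdomf).subtype _
    have hsumg : Summable fun y : ↑((S : Set M.X))ᶜ => th M x0 S (k+1) (y : M.X) * g y :=
      (summable_th_mul M x0 S k g hdomg).subtype _
    have hsum1 : Summable fun y : ↑((S : Set M.X))ᶜ => th M x0 S (k+1) (y : M.X) * 1 :=
      ((summable_th M x0 S k).subtype _).congr (fun y => (mul_one _).symm)
    rw [div_eq_mul_inv, ← tsum_mul_left, ← tsum_mul_right, ← Summable.tsum_add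
      (hsum1.mul_left a) (hsumg.mul_right BR⁻¹)]
    apply Summable.tsum_le_tsum _ hsumf ((hsum1.mul_left a).add (hsumg.mul_right BR⁻¹))
    rintro ⟨y, hy⟩
    show th M x0 S (k+1) y * f y
      ≤ a * (th M x0 S (k+1) y * 1) + th M x0 S (k+1) y * g y * BR⁻¹
    have hyS : y ∉ S := by
      intro hc
      exact hy (by exact_mod_cast hc)
    have hyS' : ¬ (a < f y ∧ f y ≤ b) := fun hc => hyS ((hSmem y).2 hc)
    rcases le_or_gt (f y) a with hfa | hfa
    · have h1 : th M x0 S (k+1) y * f y ≤ a * (th M x0 S (k+1) y * 1) := by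
        rw [mul_one]
        rw [mul_comm a _]
        exact mul_le_mul_of_nonneg_left hfa (hθnn (k+1) y)
      have h2 : 0 ≤ th M x0 S (k+1) y * g y * BR⁻¹ :=
        mul_nonneg (mul_nonneg (hθnn (k+1) y) (hgpos y)) (inv_nonneg.2 hBR.le)
      linarith
    · have hfb : b < f y := by
        by_contra hcb
        exact hyS' ⟨hfa, not_lt.1 hcb⟩
      have h1 : th M x0 S (k+1) y * f y ≤ th M x0 S (k+1) y * (g y / BR) :=
        mul_le_mul_of_nonneg_left (hfg y hfb) (hθnn (k+1) y)
      have h2 : 0 ≤ a * (th M x0 S (k+1) y * 1) :=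
        mul_nonneg ha.le (mul_nonneg (hθnn (k+1) y) zero_le_one)
      have h3 : th M x0 S (k+1) y * (g y / BR) = th M x0 S (k+1) y * g y * BR⁻¹ := by
        rw [div_eq_mul_inv]; ring
      linarith
  -- assemble
  have hΦb : (∑ y ∈ S, th M x0 S n y * f y) ≤ b * (∑ y ∈ S, th M x0 S n y * 1) := by
    rw [Finset.mul_sum]
    apply Finset.sum_le_sum
    intro y hy
    rw [mul_one, mul_comm b _]
    exact mul_le_mul_of_nonneg_left ((hSmem y).1 hy).2 (hθnn n y)
  have hXm_sum : (∑ k ∈ Finset.range n,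
      ∑' (y : ↑((S : Set M.X))ᶜ), th M x0 S (k+1) (y : M.X) * 1) ≤ 1 := by
    have := T3 n
    have h0 : 0 ≤ ∑ y ∈ S, th M x0 S n y * 1 :=
      Finset.sum_nonneg fun y _ => mul_nonneg (hθnn n y) zero_le_one
    linarith
  have hXΨ_sum : (∑ k ∈ Finset.range n,
      ∑' (y : ↑((S : Set M.X))ᶜ), th M x0 S (k+1) (y : M.X) * g y)
      ≤ g x0 + CB * K := by
    have h2 := T2 n
    have h3 : CB * (∑ k ∈ Finset.range n, ∑ y ∈ S, th M x0 S k y / M.γ y) ≤ CB * K :=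
      mul_le_mul_of_nonneg_left (hT n) hCB
    linarith [hΨnn n]
  have hXΦ_sum : (∑ k ∈ Finset.range n,
      ∑' (y : ↑((S : Set M.X))ᶜ), th M x0 S (k+1) (y : M.X) * f y)
      ≤ a + (g x0 + CB * K) / BR := by
    have h1 : (∑ k ∈ Finset.range n,
        ∑' (y : ↑((S : Set M.X))ᶜ), th M x0 S (k+1) (y : M.X) * f y)
        ≤ ∑ k ∈ Finset.range n,
            (a * (∑' (y : ↑((S : Set M.X))ᶜ), th M x0 S (k+1) (y : M.X) * 1)
              + (∑' (y : ↑((S : Set M.X))ᶜ), th M x0 S (k+1) (y : M.X) * g y) / BR) :=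
      Finset.sum_le_sum fun k _ => hXdec k
    refine h1.trans ?_
    rw [Finset.sum_add_distrib, ← Finset.mul_sum, ← Finset.sum_div]
    have h2 : a * (∑ k ∈ Finset.range n,
        ∑' (y : ↑((S : Set M.X))ᶜ), th M x0 S (k+1) (y : M.X) * 1) ≤ a * 1 :=
      mul_le_mul_of_nonneg_left hXm_sum ha.le
    have h3 : (∑ k ∈ Finset.range n,
        ∑' (y : ↑((S : Set M.X))ᶜ), th M x0 S (k+1) (y : M.X) * g y) / BR
        ≤ (g x0 + CB * K) / BR := by
      rw [div_eq_mul_inv, div_eq_mul_inv]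
      exact mul_le_mul_of_nonneg_right hXΨ_sum (inv_nonneg.2 hBR.le)
    linarith
  have hmassb : (∑ y ∈ S, th M x0 S n y * 1) ≤ γm * K / n := by
    have hnpos : (0:ℝ) < n := by exact_mod_cast hn
    rw [le_div_iff₀ hnpos]
    calc (∑ y ∈ S, th M x0 S n y * 1) * n = n * (∑ y ∈ S, th M x0 S n y * 1) := by ring
      _ ≤ γm * K := hmassn
  have hεT : ε * (∑ k ∈ Finset.range n, ∑ y ∈ S, th M x0 S k y / M.γ y) ≤ ε * K :=
    mul_le_mul_of_nonneg_left (hT n) hε.le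
  have hbm : b * (∑ y ∈ S, th M x0 S n y * 1) ≤ b * (γm * K / n) := by
    have hb0 : 0 < b :=
      lt_trans ha (lt_of_lt_of_le ((hSmem x0).1 hx0).1 ((hSmem x0).1 hx0).2)
    exact mul_le_mul_of_nonneg_left hmassb hb0.le
  calc f x0 ≤ _ := T1 n
    _ ≤ b * (γm * K / n) + a + (g x0 + CB * K) / BR + ε * K := by
        linarith [hΦb, hXΦ_sum, hεT, hbm]

end CTMCProof
open CTMC CTMCProof in
/-- Theorem (implosion, part 2): under the stated drift conditions the chain
does not implode towards the sublevel set `{f ≤ a}`: there is no uniform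
bound `K` on `E_x τ_{{f ≤ a}}` over `x ∉ {f ≤ a}`. -/
theorem statement8 (M : CTMC) (hrec : M.JumpRecurrent)
    (f : M.X → ℝ) (hf : M.InDomPos f) (hfinf : M.FinSublevels f)
    (a c ε r : ℝ) (ha : 0 < a) (hc : 0 < c) (hε : 0 < ε) (hr : 1 < r)
    (hfr : M.InDomPos fun x => f x ^ r)
    (hdrift1 : ∀ x : M.X, a < f x → -ε ≤ M.gen f x)
    (hdrift2 : ∀ x : M.X, a < f x → M.gen (fun y => f y ^ r) x ≤ c * f x ^ (r - 1)) :
    ¬ ∃ K : ℝ, 0 < K ∧ ∀ x : M.X, a < f x →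
      ∫⁻ ω, M.tau {y | f y ≤ a} ω ∂ M.μ x ≤ ENNReal.ofReal K := by
  rintro ⟨K, hK, hbound⟩
  have hfpos := hf.1
  have hrr : 0 < r - 1 := by linarith
  set C : ℝ := a + (c + ε) * K + 2 with hC
  -- choose a starting point far away
  obtain ⟨x0, hx0c⟩ : ∃ x : M.X, x ∉ {x : M.X | f x ≤ max C 1} :=
    (Set.Finite.infinite_compl (hfinf (max C 1))).nonempty
  have hF : max C 1 < f x0 := not_le.1 hx0c
  have hF1 : 1 < f x0 := lt_of_le_of_lt (le_max_right _ _) hF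
  have hFC : C < f x0 := lt_of_le_of_lt (le_max_left _ _) hF
  have hFa : a < f x0 := by
    have h1 : 0 ≤ (c + ε) * K := mul_nonneg (by linarith) hK.le
    have h2 : a < C := by rw [hC]; linarith
    linarith
  have hF0 : 0 < f x0 := lt_trans ha hFa
  -- the truncation level b
  set b : ℝ := f x0 ^ (r / (r-1)) with hb
  have hrdiv : 1 ≤ r / (r-1) := by
    rw [le_div_iff₀ hrr]; linarith
  have hbF : f x0 ≤ b := by
    have h := Real.rpow_le_rpow_of_exponent_le hF1.le hrdiv
    rwa [Real.rpow_one] at h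
  have hb1 : 1 ≤ b := le_trans hF1.le hbF
  have hb0 : 0 < b := lt_of_lt_of_le one_pos hb1
  set BR : ℝ := b ^ (r-1) with hBRdef
  have hBR : 0 < BR := Real.rpow_pos_of_pos hb0 _
  have hBReq : BR = f x0 ^ r := by
    rw [hBRdef, hb, ← Real.rpow_mul hF0.le]
    congr 1
    field_simp
  -- the finite region S
  have hSfin : ({x : M.X | a < f x ∧ f x ≤ b}).Finite :=
    (hfinf b).subset (fun x hx => hx.2)
  set S : Finset M.X := hSfin.toFinset with hS
  have hSmem : ∀ y : M.X, y ∈ S ↔ a < f y ∧ f y ≤ b := fun y => hSfin.mem_toFinset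
  have hx0S : x0 ∈ S := (hSmem x0).2 ⟨hFa, hbF⟩
  have hSa : ∀ x ∈ S, a < f x := fun x hx => ((hSmem x).1 hx).1
  have hSne : S.Nonempty := ⟨x0, hx0S⟩
  -- maximal rate on S
  set γm : ℝ := (S.image M.γ).max' (hSne.image _) with hγmdef
  have hγm : ∀ y ∈ S, M.γ y ≤ γm := fun y hy =>
    Finset.le_max' _ _ (Finset.mem_image_of_mem _ hy)
  have hγmpos : 0 < γm := lt_of_lt_of_le (M.γ_pos x0) (hγm x0 hx0S)
  -- drift conditions in one-step-expectation form
  have hdomf : ∀ x ∈ S, Summable fun y => M.P x y * f y :=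
    fun x _ => summable_P_mul M x f (hf.2 x)
  have hdomg : ∀ x ∈ S, Summable fun y => M.P x y * (f y ^ r) :=
    fun x _ => summable_P_mul M x (fun y => f y ^ r) (hfr.2 x)
  have hdr1 : ∀ x ∈ S, f x - ε / M.γ x ≤ ∑' y, M.P x y * f y := by
    intro x hx
    rw [tsum_P_mul M x f (hf.2 x)]
    have h1 : -ε ≤ M.gen f x := hdrift1 x (hSa x hx)
    have hγ := M.γ_pos x
    have h0 : 0 ≤ (M.gen f x + ε) / M.γ x := div_nonneg (by linarith) hγ.le
    have heq : M.gen f x / M.γ x - -ε / M.γ x = (M.gen f x + ε) / M.γ x := by ring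
    have heq2 : f x - ε / M.γ x = f x + -ε / M.γ x := by ring
    linarith
  have hdr2 : ∀ x ∈ S, ∑' y, M.P x y * (f y ^ r) ≤ f x ^ r + (c * BR) / M.γ x := by
    intro x hx
    rw [tsum_P_mul M x (fun y => f y ^ r) (hfr.2 x)]
    have h1 : M.gen (fun y => f y ^ r) x ≤ c * f x ^ (r-1) := hdrift2 x (hSa x hx)
    have h2 : f x ^ (r-1) ≤ b ^ (r-1) :=
      Real.rpow_le_rpow (hfpos x) ((hSmem x).1 hx).2 hrr.le
    have h3 : M.gen (fun y => f y ^ r) x ≤ c * BR := by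
      refine le_trans h1 ?_
      rw [hBRdef]
      exact mul_le_mul_of_nonneg_left h2 hc.le
    have hγ := M.γ_pos x
    have h0 : 0 ≤ (c * BR - M.gen (fun y => f y ^ r) x) / M.γ x :=
      div_nonneg (by linarith) hγ.le
    have heq : (c * BR) / M.γ x - M.gen (fun y => f y ^ r) x / M.γ x
        = (c * BR - M.gen (fun y => f y ^ r) x) / M.γ x := by ring
    linarith
  -- the overshoot bound
  have hfg : ∀ y, b < f y → f y ≤ (f y ^ r) / BR := by
    intro y hby
    have hypos : 0 < f y := lt_trans hb0 hby
    rw [le_div_iff₀ hBR]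
    have h1 : BR ≤ f y ^ (r-1) := by
      rw [hBRdef]
      exact Real.rpow_le_rpow hb0.le hby.le hrr.le
    calc f y * BR ≤ f y * f y ^ (r-1) := mul_le_mul_of_nonneg_left h1 (hfpos y)
      _ = f y ^ r := by
          have h2 := (Real.rpow_add hypos 1 (r-1)).symm
          rw [Real.rpow_one] at h2
          rw [h2]
          congr 1
          ring
  -- the expected-time bound
  have hT : ∀ n : ℕ, ∑ k ∈ Finset.range n, ∑ y ∈ S, th M x0 S k y / M.γ y ≤ K :=
    fun n => Tn_le_K M x0 S f a hSa K hK.le (hbound x0 hFa) n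
  -- choose n large
  set n : ℕ := max 1 ⌈b * γm * K⌉₊ with hn
  have hn1 : 1 ≤ n := le_max_left _ _
  have hfb := final_bound M x0 S f (fun y => f y ^ r) a b BR (c * BR) ε K γm
    hfpos (fun y => Real.rpow_nonneg (hfpos y) r) hx0S hSmem ha hε hBR
    (mul_nonneg hc.le hBR.le) hK.le hfg hdomf hdomg hdr1 hdr2 hγm hγmpos hT n hn1
  -- numerics
  have hbn : b * (γm * K / n) ≤ 1 := by
    have h1 : (⌈b * γm * K⌉₊ : ℝ) ≤ (n : ℝ) := by
      exact_mod_cast Nat.le_max_right 1 ⌈b * γm * K⌉₊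
    have hnge : b * γm * K ≤ (n : ℝ) := le_trans (Nat.le_ceil _) h1
    have hnpos : (0:ℝ) < n := by exact_mod_cast hn1
    have heq : b * (γm * K / n) = b * γm * K / n := by ring
    rw [heq, div_le_one hnpos]
    exact hnge
  have hFr0 : (0:ℝ) < f x0 ^ r := Real.rpow_pos_of_pos hF0 r
  have hgBR : (f x0 ^ r + (c * BR) * K) / BR = 1 + c * K := by
    rw [hBReq]
    field_simp
  rw [hgBR] at hfb
  have hCK : (c + ε) * K = c * K + ε * K := add_mul c ε K
  have : f x0 ≤ C := by rw [hC]; linarith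
  linarith
end
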